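/- Let F be a free filter on ℕ (a filter containing every cofinite subset of ℕ), identified with a subset of Cantor space 2^ω. If F is μ-measurable, then F has μ-measure zero. Equivalently, every free filter either is μ-null or is not μ-measurable. -/
import Mathlib


open MeasureTheory

/-- `F` is a filter of subsets of `ℕ`: it contains `ℕ`, is closed under finite (binary)
intersections and under supersets. -/
def IsSetFilter (F : Set (Set ℕ)) : Prop :=
  Set.univ ∈ F ∧ (∀ X ∈ F, ∀ Y ∈ F, X ∩ Y ∈ F) ∧ (∀ X ∈ F, ∀ Y : Set ℕ, X ⊆ Y → Y ∈ F)

/-- A free filter: a proper filter containing every cofinite subset of `ℕ`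
(so every member of `F` is infinite). -/
def IsFreeFilter (F : Set (Set ℕ)) : Prop :=
  IsSetFilter F ∧ ∅ ∉ F ∧ ∀ X : Set ℕ, Xᶜ.Finite → X ∈ F

open scoped Classical in
/-- The characteristic function of `X ⊆ ℕ`, as a point of Cantor space `2^ω = ℕ → Bool`. -/
noncomputable def chi (X : Set ℕ) : ℕ → Bool := fun n => if n ∈ X then true else false

/-- `μ` is the canonical product probability measure on Cantor space (the infinite product
of uniform measures on `{0,1}`, i.e. Haar measure): every cylinder determined by values on
a finite set `s` has measure `(1/2)^|s|`. -/
def IsCantorMeasure (μ : Measure (ℕ → Bool)) : Prop :=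
  ∀ (s : Finset ℕ) (f : ℕ → Bool),
    μ {x : ℕ → Bool | ∀ i ∈ s, x i = f i} = (1 / 2 : ENNReal) ^ s.card


noncomputable section CantorAux

/-- Cylinder sets in Cantor space. -/
def cantorCyl (s : Finset ℕ) (f : ℕ → Bool) : Set (ℕ → Bool) :=
  {x : ℕ → Bool | ∀ i ∈ s, x i = f i}

lemma cantorCyl_congr {s : Finset ℕ} {f g : ℕ → Bool} (h : ∀ i ∈ s, f i = g i) :
    cantorCyl s f = cantorCyl s g := by
  ext x; exact ⟨fun hx i hi => (hx i hi).trans (h i hi),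
    fun hx i hi => (hx i hi).trans (h i hi).symm⟩

lemma measurableSet_cantorCyl (s : Finset ℕ) (f : ℕ → Bool) :
    MeasurableSet (cantorCyl s f) := by
  have : cantorCyl s f = ⋂ i ∈ s, (fun x : ℕ → Bool => x i) ⁻¹' {f i} := by
    ext x; simp [cantorCyl]
  rw [this]
  exact MeasurableSet.biInter s.countable_toSet
    (fun i _ => (measurable_pi_apply i) (measurableSet_singleton (f i)))

/-- The collection of all cylinders. -/
def cantorCyls : Set (Set (ℕ → Bool)) := {S | ∃ s f, S = cantorCyl s f}

lemma isPiSystem_cantorCyls : IsPiSystem cantorCyls := by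
  rintro S ⟨s, f, rfl⟩ T ⟨t, g, rfl⟩ hne
  classical
  obtain ⟨x, hxs, hxt⟩ := hne
  refine ⟨s ∪ t, fun n => if n ∈ s then f n else g n, ?_⟩
  ext y
  simp only [Set.mem_inter_iff, cantorCyl, Set.mem_setOf_eq, Finset.mem_union]
  constructor
  · rintro ⟨h1, h2⟩ i hi
    rcases hi with hi | hi
    · simp [hi, h1 i hi]
    · by_cases his : i ∈ s
      · simp [his, h1 i his]
      · simp [his, h2 i hi]
  · intro h
    constructor
    · intro i hi
      have := h i (Or.inl hi); simpa [hi] using this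
    · intro i hi
      by_cases his : i ∈ s
      · have := h i (Or.inl his)
        have hfg : f i = g i := by
          have h1 := hxs i his
          have h2 := hxt i hi
          rw [← h1, h2]
        simp [his, hfg] at this ⊢; exact this
      · have := h i (Or.inr hi); simpa [his] using this

lemma generateFrom_cantorCyls :
    (inferInstance : MeasurableSpace (ℕ → Bool)) = MeasurableSpace.generateFrom cantorCyls := by
  refine le_antisymm ?_ (MeasurableSpace.generateFrom_le ?_)
  · rw [show (inferInstance : MeasurableSpace (ℕ → Bool)) = MeasurableSpace.pi from rfl]
    refine iSup_le fun i => ?_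
    have hm : @Measurable (ℕ → Bool) Bool (MeasurableSpace.generateFrom cantorCyls) _
        (fun x : ℕ → Bool => x i) := by
      refine @measurable_to_countable' Bool (ℕ → Bool) _ _
        (MeasurableSpace.generateFrom cantorCyls) _ fun b => ?_
      have : (fun x : ℕ → Bool => x i) ⁻¹' {b} = cantorCyl {i} (fun _ => b) := by
        ext x; simp [cantorCyl]
      rw [this]
      exact MeasurableSpace.measurableSet_generateFrom ⟨{i}, fun _ => b, rfl⟩
    exact hm.comap_le
  · rintro S ⟨s, f, rfl⟩
    exact measurableSet_cantorCyl s f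


lemma IsCantorMeasure'.univ {μ : Measure (ℕ → Bool)}
    (hμ : ∀ (s : Finset ℕ) (f : ℕ → Bool), μ (cantorCyl s f) = (1 / 2 : ENNReal) ^ s.card) :
    μ Set.univ = 1 := by
  have := hμ ∅ (fun _ => true)
  simpa [cantorCyl] using this

lemma cantorMeasure_unique {μ ν : Measure (ℕ → Bool)}
    (hμ : ∀ (s : Finset ℕ) (f : ℕ → Bool), μ (cantorCyl s f) = (1 / 2 : ENNReal) ^ s.card)
    (hν : ∀ (s : Finset ℕ) (f : ℕ → Bool), ν (cantorCyl s f) = (1 / 2 : ENNReal) ^ s.card) :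
    μ = ν := by
  have hfin : IsFiniteMeasure μ := ⟨by rw [IsCantorMeasure'.univ hμ]; exact ENNReal.one_lt_top⟩
  refine ext_of_generate_finite cantorCyls generateFrom_cantorCyls isPiSystem_cantorCyls
    ?_ ?_
  · rintro S ⟨s, f, rfl⟩
    rw [hμ s f, hν s f]
  · rw [IsCantorMeasure'.univ hμ, IsCantorMeasure'.univ hν]

/-- The "xor with `g`" homeomorphism of Cantor space, as a measurable equivalence. -/
def cantorXor (g : ℕ → Bool) : (ℕ → Bool) ≃ᵐ (ℕ → Bool) where
  toFun x := fun n => xor (x n) (g n)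
  invFun x := fun n => xor (x n) (g n)
  left_inv x := by funext n; simp
  right_inv x := by funext n; simp
  measurable_toFun := by
    refine measurable_pi_lambda _ fun n => ?_
    exact (measurable_from_top (f := fun b : Bool => xor b (g n))).comp (measurable_pi_apply n)
  measurable_invFun := by
    refine measurable_pi_lambda _ fun n => ?_
    exact (measurable_from_top (f := fun b : Bool => xor b (g n))).comp (measurable_pi_apply n)

lemma cantorXor_preimage_cyl (g : ℕ → Bool) (s : Finset ℕ) (f : ℕ → Bool) :
    (cantorXor g) ⁻¹' (cantorCyl s f) = cantorCyl s (fun n => xor (f n) (g n)) := by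
  ext x
  simp only [Set.mem_preimage, cantorCyl, Set.mem_setOf_eq, cantorXor]
  have key : ∀ b c d : Bool, (xor b c = d ↔ b = xor d c) := by decide
  constructor
  · intro h i hi; exact (key _ _ _).1 (h i hi)
  · intro h i hi; exact (key _ _ _).2 (h i hi)

lemma map_cantorXor {μ : Measure (ℕ → Bool)}
    (hμ : ∀ (s : Finset ℕ) (f : ℕ → Bool), μ (cantorCyl s f) = (1 / 2 : ENNReal) ^ s.card)
    (g : ℕ → Bool) : μ.map (cantorXor g) = μ := by
  refine cantorMeasure_unique (fun s f => ?_) hμ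
  rw [MeasurableEquiv.map_apply, cantorXor_preimage_cyl]
  exact hμ s _

lemma cantorXor_measure_preimage {μ : Measure (ℕ → Bool)}
    (hμ : ∀ (s : Finset ℕ) (f : ℕ → Bool), μ (cantorCyl s f) = (1 / 2 : ENNReal) ^ s.card)
    (g : ℕ → Bool) (S : Set (ℕ → Bool)) : μ ((cantorXor g) ⁻¹' S) = μ S := by
  conv_rhs => rw [← map_cantorXor hμ g]
  rw [MeasurableEquiv.map_apply]

end CantorAux

section MainAux

variable {F : Set (Set ℕ)}

lemma chi_image_eq (hF : IsFreeFilter F) :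
    chi '' F = {x : ℕ → Bool | {n | x n = true} ∈ F} := by
  classical
  ext x
  constructor
  · rintro ⟨X, hX, rfl⟩
    have : {n | chi X n = true} = X := by
      ext n; simp [chi]
    simpa [this] using hX
  · intro hx
    refine ⟨{n | x n = true}, hx, ?_⟩
    funext n
    cases hxn : x n <;> simp [chi, hxn]

lemma mem_filter_xor (hF : IsFreeFilter F) (g : ℕ → Bool) (hg : {n | g n = true}.Finite)
    {x : ℕ → Bool} (hx : {n | x n = true} ∈ F) : {n | xor (x n) (g n) = true} ∈ F := by
  obtain ⟨⟨_, hinter, hsup⟩, _, hcof⟩ := hF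
  have h1 : {n | g n = true}ᶜ ∈ F := by
    apply hcof
    rw [compl_compl]
    exact hg
  have h2 : {n | x n = true} ∩ {n | g n = true}ᶜ ∈ F := hinter _ hx _ h1
  refine hsup _ h2 _ ?_
  rintro n ⟨hxn, hgn⟩
  simp only [Set.mem_compl_iff, Set.mem_setOf_eq] at hxn hgn ⊢
  cases hgb : g n
  · simp [hxn, hgb]
  · exact absurd hgb hgn

lemma xor_preimage_filter (hF : IsFreeFilter F) (g : ℕ → Bool)
    (hg : {n | g n = true}.Finite) :
    (cantorXor g) ⁻¹' (chi '' F) = chi '' F := by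
  rw [chi_image_eq hF]
  have key : ∀ b c : Bool, xor (xor b c) c = b := by decide
  ext x
  simp only [Set.mem_preimage, Set.mem_setOf_eq, cantorXor, MeasurableEquiv.coe_mk,
    Equiv.coe_fn_mk]
  constructor
  · intro h
    have := mem_filter_xor hF g hg (x := fun n => xor (x n) (g n)) h
    simpa [key] using this
  · intro h
    exact mem_filter_xor hF g hg h

end MainAux

/-- Every free filter on `ℕ` which is `μ`-measurable (identified with a subset of Cantor
space) has `μ`-measure zero: every free filter is either null or non-measurable. -/
theorem free_filter_null_or_nonmeasurable
    (μ : Measure (ℕ → Bool)) (hμ : IsCantorMeasure μ)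
    (F : Set (Set ℕ)) (hF : IsFreeFilter F)
    (hmeas : NullMeasurableSet (chi '' F) μ) :
    μ (chi '' F) = 0 := by
  classical
  have hμ' : ∀ (s : Finset ℕ) (f : ℕ → Bool),
      μ (cantorCyl s f) = (1 / 2 : ENNReal) ^ s.card := hμ
  set A : Set (ℕ → Bool) := chi '' F with hAdef
  set a : ENNReal := μ A with ha
  have huniv : μ Set.univ = 1 := IsCantorMeasure'.univ hμ'
  haveI : IsFiniteMeasure μ := ⟨by rw [huniv]; exact ENNReal.one_lt_top⟩
  have ha_le : a ≤ 1 := by rw [← huniv]; exact measure_mono (Set.subset_univ _)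
  have ha_ne_top : a ≠ ⊤ := (lt_of_le_of_lt ha_le ENNReal.one_lt_top).ne
  -- Step 1: constancy over patterns
  have hconst : ∀ (s : Finset ℕ) (f f' : ℕ → Bool),
      μ (A ∩ cantorCyl s f) = μ (A ∩ cantorCyl s f') := by
    intro s f f'
    set g : ℕ → Bool := fun n => if n ∈ s then xor (f n) (f' n) else false with hg
    have hgfin : {n | g n = true}.Finite := by
      apply s.finite_toSet.subset
      intro n hn
      simp only [Set.mem_setOf_eq, hg] at hn
      by_cases hns : n ∈ s
      · exact hns
      · simp [hns] at hn
    have hpre : (cantorXor g) ⁻¹' (A ∩ cantorCyl s f') = A ∩ cantorCyl s f := by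
      rw [Set.preimage_inter, xor_preimage_filter hF g hgfin, cantorXor_preimage_cyl]
      congr 1
      apply cantorCyl_congr
      intro i hi
      have : ∀ b c : Bool, xor b (xor c b) = c := by decide
      simp [hg, hi, this]
    rw [← hpre, cantorXor_measure_preimage hμ' g]
  -- Step 2: μ (A ∩ cyl) = a * (1/2)^|s|
  have hcyl : ∀ (s : Finset ℕ) (f : ℕ → Bool),
      μ (A ∩ cantorCyl s f) = a * (1 / 2 : ENNReal) ^ s.card := by
    intro s f
    set ext : (↑s → Bool) → (ℕ → Bool) :=
      fun h n => if hn : n ∈ s then h ⟨n, hn⟩ else false with hext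
    have hcover : (⋃ h : ↑s → Bool, A ∩ cantorCyl s (ext h)) = A := by
      ext x
      simp only [Set.mem_iUnion, Set.mem_inter_iff]
      constructor
      · rintro ⟨h, hxA, _⟩; exact hxA
      · intro hxA
        refine ⟨fun i => x i, hxA, fun i hi => ?_⟩
        simp [hext, hi]
    have hdisj : Pairwise (Function.onFun (AEDisjoint μ)
        (fun h : ↑s → Bool => A ∩ cantorCyl s (ext h))) := by
      intro h h' hne
      apply Disjoint.aedisjoint
      rw [Set.disjoint_left]
      rintro x ⟨_, hx⟩ ⟨_, hx'⟩
      apply hne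
      funext i
      have e1 := hx i i.2
      have e2 := hx' i i.2
      simp only [hext, i.2, dif_pos] at e1 e2
      rw [← e1, ← e2]
    have hnm : ∀ h : ↑s → Bool, NullMeasurableSet (A ∩ cantorCyl s (ext h)) μ :=
      fun h => hmeas.inter (measurableSet_cantorCyl s (ext h)).nullMeasurableSet
    have hsum : ∑' h : ↑s → Bool, μ (A ∩ cantorCyl s (ext h)) = a := by
      rw [← measure_iUnion₀ hdisj hnm, hcover]
    have hval : ∀ h : ↑s → Bool, μ (A ∩ cantorCyl s (ext h)) = μ (A ∩ cantorCyl s f) :=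
      fun h => hconst s (ext h) f
    rw [tsum_congr hval, tsum_fintype, Finset.sum_const, Finset.card_univ,
      nsmul_eq_mul] at hsum
    have hcard : (Fintype.card (↑s → Bool) : ENNReal) = 2 ^ s.card := by
      simp [Fintype.card_fun, Fintype.card_coe]
    rw [hcard] at hsum
    have h2n : ((2 : ENNReal)) ^ s.card ≠ 0 := pow_ne_zero _ (by norm_num)
    have h2t : ((2 : ENNReal)) ^ s.card ≠ ⊤ := ENNReal.pow_ne_top (by norm_num)
    have hhalf : (2 : ENNReal) ^ s.card * (1 / 2 : ENNReal) ^ s.card = 1 := by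
      rw [← mul_pow, one_div, ENNReal.mul_inv_cancel (by norm_num) (by norm_num), one_pow]
    refine (ENNReal.mul_right_inj h2n h2t).mp ?_
    rw [hsum, mul_left_comm, hhalf, mul_one]
    -- Step 3: μ.restrict A = a • μ
  have hrest : μ.restrict A = a • μ := by
    refine ext_of_generate_finite cantorCyls generateFrom_cantorCyls isPiSystem_cantorCyls
      ?_ ?_
    · rintro S ⟨s, f, rfl⟩
      rw [Measure.restrict_apply (measurableSet_cantorCyl s f), Set.inter_comm,
        hcyl s f, Measure.smul_apply, smul_eq_mul, hμ' s f]
    · rw [Measure.restrict_apply MeasurableSet.univ, Set.univ_inter,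
        Measure.smul_apply, smul_eq_mul, huniv, mul_one]
  -- Step 4: a = a * a
  have hsq : a = a * a := by
    have hBm := measurableSet_toMeasurable μ A
    have h1 : μ.restrict A (toMeasurable μ A) = a := by
      rw [Measure.restrict_apply hBm, Set.inter_eq_right.mpr (subset_toMeasurable μ A)]
    have h2 : (a • μ) (toMeasurable μ A) = a * a := by
      rw [Measure.smul_apply, smul_eq_mul, measure_toMeasurable]
    rw [hrest, h2] at h1
    exact h1.symm
  -- Step 5: the flip map
  set T := cantorXor (fun _ => true) with hT
  set D := T ⁻¹' A with hD
  have hDmeasval : μ D = a := cantorXor_measure_preimage hμ' _ A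
  have hDnull : NullMeasurableSet D μ := by
    have hmp : MeasurePreserving T μ μ := ⟨T.measurable, map_cantorXor hμ' _⟩
    exact hmeas.preimage hmp.quasiMeasurePreserving
  have hdisjAD : Disjoint A D := by
    rw [Set.disjoint_left]
    intro x hxA hxD
    rw [hAdef, chi_image_eq hF] at hxA
    have hxD' : {n | xor (x n) true = true} ∈ F := by
      rw [hD, hAdef, chi_image_eq hF] at hxD
      exact hxD
    obtain ⟨⟨_, hinter, _⟩, hne, _⟩ := hF
    apply hne
    have hmem := hinter _ hxA _ hxD'
    have hempty : {n | x n = true} ∩ {n | xor (x n) true = true} = (∅ : Set ℕ) := by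
      ext n
      simp only [Set.mem_inter_iff, Set.mem_setOf_eq, Set.mem_empty_iff_false, iff_false]
      rintro ⟨h1, h2⟩
      rw [h1] at h2
      simp at h2
    rwa [hempty] at hmem
  have hsum2 : a + a ≤ 1 := by
    calc a + a = μ (A ∪ D) := by
          rw [measure_union₀ hDnull hdisjAD.aedisjoint, hDmeasval]
      _ ≤ μ Set.univ := measure_mono (Set.subset_univ _)
      _ = 1 := huniv
  -- conclude
  by_contra h0
  have h1 : (1 : ENNReal) = a :=
    (ENNReal.mul_right_inj h0 ha_ne_top).mp (by rw [mul_one]; exact hsq)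
  rw [← h1] at hsum2
  norm_num at hsum2
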